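/- There exists a Borel set H ⊆ 2^ω × 2^ω such that every vertical section (H)_x is meager, and for every meager set A ⊆ 2^ω there exists x ∈ 2^ω with A ⊆ (H)_x. -/

import Mathlib

namespace UnivMeager

abbrev C := ℕ → Bool

/-- The basic clopen cylinder determined by a finite string. -/
def cyl (t : List Bool) : Set C := {y | ∀ i < t.length, y i = t.getD i false}

lemma mem_cyl {t : List Bool} {y : C} : y ∈ cyl t ↔ ∀ i < t.length, y i = t.getD i false :=
  Iff.rfl

lemma cyl_eq_cylinder (t : List Bool) :
    cyl t = PiNat.cylinder (fun i => t.getD i false) t.length := rfl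

lemma ext_mem_cyl (t : List Bool) : (fun i => t.getD i false) ∈ cyl t :=
  fun _ _ => rfl

lemma isOpen_cyl (t : List Bool) : IsOpen (cyl t) := by
  rw [cyl_eq_cylinder]
  exact PiNat.isOpen_cylinder _ _ _

lemma measurableSet_coord (j : ℕ) (b : Bool) : MeasurableSet {c : C | c j = b} := by
  have : {c : C | c j = b} = (fun c : C => c j) ⁻¹' {b} := rfl
  rw [this]
  exact measurable_pi_apply j (measurableSet_singleton b)

lemma measurableSet_cyl (t : List Bool) : MeasurableSet (cyl t) := by
  have : cyl t = ⋂ i ∈ Finset.range t.length, {y : C | y i = t.getD i false} := by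
    ext y; simp [mem_cyl]
  rw [this]
  exact MeasurableSet.biInter (Set.to_countable _) fun i _ => measurableSet_coord i _

/-- The dense open set coded by an extension-choosing function `G`. -/
def UU (G : List Bool → List Bool) : Set C := ⋃ s : List Bool, cyl (s ++ G s)

lemma dense_UU (G : List Bool → List Bool) : Dense (UU G) := by
  rw [dense_iff_inter_open]
  intro V hV ⟨y, hy⟩
  obtain ⟨v, ⟨z, m, rfl⟩, hyv, hvV⟩ :=
    (PiNat.isTopologicalBasis_cylinders (fun _ : ℕ => Bool)).exists_subset_of_mem_open hy hV
  set s : List Bool := List.ofFn (fun i : Fin m => z i) with hs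
  have hslen : s.length = m := List.length_ofFn
  refine ⟨fun i => (s ++ G s).getD i false, hvV ?_, Set.mem_iUnion.2 ⟨s, ext_mem_cyl _⟩⟩
  intro i hi
  have his : i < s.length := hslen ▸ hi
  show (s ++ G s).getD i false = z i
  rw [List.getD_append _ _ _ _ his, List.getD_eq_getElem _ _ his]
  simp [hs]

/-- The closed nowhere dense set coded by `G`. -/
lemma isNowhereDense_compl_UU (G : List Bool → List Bool) : IsNowhereDense (UU G)ᶜ := by
  have h := isClosed_isNowhereDense_iff_compl (s := (UU G)ᶜ)
  rw [compl_compl] at h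
  exact (h.mpr ⟨isOpen_iUnion (fun s => isOpen_cyl _), dense_UU G⟩).2

lemma isMeagre_compl_UU (G : List Bool → List Bool) : IsMeagre (UU G)ᶜ := by
  rw [isMeagre_iff_countable_union_isNowhereDense]
  exact ⟨{(UU G)ᶜ}, by simpa using isNowhereDense_compl_UU G,
    Set.countable_singleton _, by simp⟩

open Classical in
/-- Decoding a finite string from an element of Cantor space. -/
noncomputable def decodeL (c : C) : List Bool :=
  if h : ∃ k, c k = true then
    List.ofFn (fun i : Fin (Nat.find h) => c (Nat.find h + 1 + i)) else []

lemma decodeL_eq {c : C} {t : List Bool} (h1 : ∀ k < t.length, c k = false)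
    (h2 : c t.length = true) (h3 : ∀ i < t.length, c (t.length + 1 + i) = t.getD i false) :
    decodeL c = t := by
  have hex : ∃ k, c k = true := ⟨t.length, h2⟩
  have hfind : Nat.find hex = t.length := by
    rw [Nat.find_eq_iff]
    exact ⟨h2, fun k hk => by simp [h1 k hk]⟩
  rw [decodeL, dif_pos hex]
  generalize hℓ : Nat.find hex = ℓ
  rw [hℓ] at hfind
  subst hfind
  apply List.ext_getElem (by simp)
  intro i hi1 hi2
  simp only [List.getElem_ofFn, Fin.coe_cast]
  rw [h3 i hi2, List.getD_eq_getElem _ _ hi2]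

lemma decodeL_spec {c : C} {t : List Bool} (hdec : decodeL c = t) (hex : ∃ k, c k = true) :
    (∀ k < t.length, c k = false) ∧ c t.length = true ∧
      ∀ i < t.length, c (t.length + 1 + i) = t.getD i false := by
  rw [decodeL, dif_pos hex] at hdec
  have hlen : Nat.find hex = t.length := by rw [← hdec, List.length_ofFn]
  refine ⟨fun k hk => ?_, hlen ▸ Nat.find_spec hex, fun i hi => ?_⟩
  · have := Nat.find_min hex (hlen ▸ hk)
    simpa using this
  · have hi' : i < (List.ofFn fun j : Fin (Nat.find hex) => c (Nat.find hex + 1 + j)).length := by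
      simp [hlen, hi]
    calc c (t.length + 1 + i)
        = (List.ofFn fun j : Fin (Nat.find hex) => c (Nat.find hex + 1 + j)).getD i false := by
          rw [List.getD_eq_getElem _ _ hi', List.getElem_ofFn]
          simp [hlen]
      _ = t.getD i false := by rw [hdec]

/-- Encoding a finite string into an element of Cantor space. -/
def encB (t : List Bool) : C := fun k =>
  if k < t.length then false else if k = t.length then true else t.getD (k - (t.length + 1)) false

lemma decodeL_encB (t : List Bool) : decodeL (encB t) = t := by
  refine decodeL_eq (fun k hk => by simp [encB, hk]) (by simp [encB]) (fun i hi => ?_)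
  have h1 : ¬ (t.length + 1 + i < t.length) := by omega
  have h2 : ¬ (t.length + 1 + i = t.length) := by omega
  have h3 : t.length + 1 + i - (t.length + 1) = i := by omega
  simp only [encB, if_neg h1, if_neg h2, h3]

/-- The fibers of `decodeL` are measurable. -/
lemma measurableSet_decodeL_fiber (t : List Bool) : MeasurableSet {c : C | decodeL c = t} := by
  classical
  set A : Set C := {c | (∀ k < t.length, c k = false) ∧ c t.length = true ∧
      ∀ i < t.length, c (t.length + 1 + i) = t.getD i false} with hA
  have hAm : MeasurableSet A := by
    have : A = (⋂ k ∈ Finset.range t.length, {c : C | c k = false}) ∩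
        ({c : C | c t.length = true} ∩
          ⋂ i ∈ Finset.range t.length, {c : C | c (t.length + 1 + i) = t.getD i false}) := by
      ext c; simp [hA, and_assoc]
    rw [this]
    refine (MeasurableSet.biInter (Set.to_countable _) fun i _ => measurableSet_coord i _).inter
      ((measurableSet_coord _ _).inter
        (MeasurableSet.biInter (Set.to_countable _) fun i _ => measurableSet_coord _ _))
  have key : {c : C | decodeL c = t} =
      A ∪ (if t = [] then {c : C | ∀ k, c k = false} else ∅) := by
    ext c
    simp only [Set.mem_setOf_eq, Set.mem_union]
    constructor
    · intro hdec
      by_cases hex : ∃ k, c k = true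
      · exact Or.inl (decodeL_spec hdec hex)
      · right
        rw [decodeL, dif_neg hex] at hdec
        push_neg at hex
        simp only [← hdec, if_pos rfl, Set.mem_setOf_eq]
        intro k; simpa using hex k
    · intro h
      rcases h with ⟨h1, h2, h3⟩ | hB
      · exact decodeL_eq h1 h2 h3
      · by_cases ht : t = []
        · rw [if_pos ht] at hB
          have hex : ¬ ∃ k, c k = true := by
            push_neg
            intro k; simp [hB k]
          rw [decodeL, dif_neg hex, ht]
        · rw [if_neg ht] at hB
          exact absurd hB (Set.notMem_empty c)
  rw [key]
  refine hAm.union ?_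
  split
  · have : {c : C | ∀ k, c k = false} = ⋂ k, {c : C | c k = false} := by ext c; simp
    rw [this]
    exact MeasurableSet.iInter fun k => measurableSet_coord k false
  · exact MeasurableSet.empty

/-- The decoding of the x-part of a pair into extension-choosing functions. -/
noncomputable def g (x : C) (n : ℕ) (s : List Bool) : List Bool :=
  decodeL (fun k => x (Encodable.encode (n, s, k)))

/-- The universal set. -/
noncomputable def H : Set (C × C) := {p | ∃ n : ℕ, p.2 ∈ (UU (g p.1 n))ᶜ}

lemma measurableSet_H : MeasurableSet H := by
  have hrep : H = ⋃ n : ℕ, ⋂ s : List Bool, ⋃ t : List Bool,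
      ({x : C | g x n s = t} ×ˢ (cyl (s ++ t))ᶜ) := by
    ext ⟨x, y⟩
    constructor
    · rintro ⟨n, hn⟩
      refine Set.mem_iUnion.2 ⟨n, Set.mem_iInter.2 fun s => Set.mem_iUnion.2
        ⟨g x n s, rfl, fun hy => hn (Set.mem_iUnion.2 ⟨s, hy⟩)⟩⟩
    · intro h
      obtain ⟨n, hn⟩ := Set.mem_iUnion.1 h
      refine ⟨n, fun hy => ?_⟩
      obtain ⟨s, hs⟩ := Set.mem_iUnion.1 hy
      obtain ⟨t, htmem⟩ := Set.mem_iUnion.1 (Set.mem_iInter.1 hn s)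
      exact htmem.2 (htmem.1 ▸ hs)
  rw [hrep]
  refine MeasurableSet.iUnion fun n => MeasurableSet.iInter fun s =>
    MeasurableSet.iUnion fun t => MeasurableSet.prod ?_ (measurableSet_cyl _).compl
  have : {x : C | g x n s = t} =
      (fun x : C => fun k => x (Encodable.encode (n, s, k))) ⁻¹' {c | decodeL c = t} := rfl
  rw [this]
  exact (measurable_pi_lambda _ fun k => measurable_pi_apply _) (measurableSet_decodeL_fiber t)

lemma section_meagre (x : C) : IsMeagre {y | (x, y) ∈ H} := by
  have : {y | (x, y) ∈ H} = ⋃ n : ℕ, (UU (g x n))ᶜ := by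
    ext y; simp [H]
  rw [this]
  exact isMeagre_iUnion fun n => isMeagre_compl_UU _

/-- For a dense open set V, every string has an extension whose cylinder is inside V. -/
lemma exists_ext {V : Set C} (hVo : IsOpen V) (hVd : Dense V) (s : List Bool) :
    ∃ t : List Bool, cyl (s ++ t) ⊆ V := by
  obtain ⟨z, hz_cyl, hzV⟩ := hVd.inter_open_nonempty (cyl s) (isOpen_cyl s)
    ⟨fun i => s.getD i false, ext_mem_cyl s⟩
  obtain ⟨v, ⟨w, m, rfl⟩, hzv, hvV⟩ :=
    (PiNat.isTopologicalBasis_cylinders (fun _ : ℕ => Bool)).exists_subset_of_mem_open hzV hVo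
  have hzm : PiNat.cylinder z m ⊆ PiNat.cylinder w m := by
    rw [PiNat.mem_cylinder_iff_eq.1 hzv]
  set M := max m s.length with hM
  refine ⟨List.ofFn (fun i : Fin (M - s.length) => z (s.length + i)), ?_⟩
  intro y hy
  apply hvV
  apply hzm
  intro i hi
  have hiM : i < M := lt_of_lt_of_le hi (le_max_left _ _)
  have hlen : (s ++ List.ofFn (fun i : Fin (M - s.length) => z (s.length + i))).length = M := by
    simp [List.length_ofFn]
    omega
  by_cases his : i < s.length
  · have h1 := hy i (by omega)
    rw [List.getD_append _ _ _ _ his] at h1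
    have h2 := hz_cyl i his
    rw [h1, h2]
  · push_neg at his
    have h1 := hy i (by omega)
    rw [List.getD_append_right _ _ _ _ his] at h1
    have hi2 : i - s.length < M - s.length := by omega
    rw [List.getD_eq_getElem _ _ (by simpa [List.length_ofFn] using hi2)] at h1
    simp only [List.getElem_ofFn] at h1
    rw [h1]
    congr 1
    omega

lemma universal {A : Set C} (hA : IsMeagre A) : ∃ x : C, A ⊆ {y | (x, y) ∈ H} := by
  classical
  obtain ⟨S, hSnwd, hScnt, hAsub⟩ := isMeagre_iff_countable_union_isNowhereDense.1 hA
  obtain ⟨f, hf⟩ := Set.Countable.exists_eq_range (hScnt.insert ∅) (Set.insert_nonempty _ _)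
  have hfnwd : ∀ n, IsNowhereDense (f n) := by
    intro n
    have : f n ∈ insert ∅ S := hf ▸ Set.mem_range_self n
    rcases this with h | h
    · rw [h]; exact isNowhereDense_empty
    · exact hSnwd _ h
  -- dense open complements of closures
  have hVo : ∀ n, IsOpen (closure (f n))ᶜ := fun n => isClosed_closure.isOpen_compl
  have hVd : ∀ n, Dense (closure (f n))ᶜ := by
    intro n
    rw [← interior_eq_empty_iff_dense_compl]
    exact hfnwd n
  choose G hG using fun n s => exists_ext (hVo n) (hVd n) s
  set x : C := fun m =>
    match Encodable.decode (α := ℕ × List Bool × ℕ) m with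
    | some (n, s, k) => encB (G n s) k
    | none => false with hx
  have hgx : ∀ n s, g x n s = G n s := by
    intro n s
    have : (fun k => x (Encodable.encode (n, s, k))) = encB (G n s) := by
      funext k
      simp [hx, Encodable.encodek]
    rw [g, this, decodeL_encB]
  refine ⟨x, fun y hy => ?_⟩
  have : y ∈ ⋃₀ insert ∅ S := Set.sUnion_mono (Set.subset_insert _ _) (hAsub hy)
  rw [hf, Set.sUnion_range] at this
  obtain ⟨n, hn⟩ := Set.mem_iUnion.1 this
  refine ⟨n, ?_⟩
  intro hyU
  obtain ⟨s, hs⟩ := Set.mem_iUnion.1 hyU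
  have : y ∈ (closure (f n))ᶜ := by
    apply hG n s
    rw [hgx] at hs
    exact hs
  exact this (subset_closure hn)

end UnivMeager

theorem exists_borel_meager_universal_set :
    ∃ H : Set ((ℕ → Bool) × (ℕ → Bool)), MeasurableSet H ∧
      (∀ x : ℕ → Bool, IsMeagre {y | (x, y) ∈ H}) ∧
      ∀ A : Set (ℕ → Bool), IsMeagre A →
        ∃ x : ℕ → Bool, A ⊆ {y | (x, y) ∈ H} := by
  exact ⟨UnivMeager.H, UnivMeager.measurableSet_H, UnivMeager.section_meagre,
    fun A hA => UnivMeager.universal hA⟩
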